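/- Let M ⊆ ℝ^d be a compact set and K ⊆ ℝ^d a compact set with nonempty interior, and let δ > 0. Then the set S'(M) = {(a, α, A) ∈ ℝ^d × ℝ × SL(d) : a + α·A·K ⊆ M, |α| = 1 + δ} is compact, even though SL(d) is not compact. -/

import Mathlib

open Metric Set

private lemma coord_le_norm {d : ℕ} (y : EuclideanSpace ℝ (Fin d)) (i : Fin d) : |y i| ≤ ‖y‖ := by
  rw [EuclideanSpace.norm_eq]
  rw [show |y i| = Real.sqrt (‖y i‖^2) by rw [Real.sqrt_sq_eq_abs]; simp]
  apply Real.sqrt_le_sqrt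
  exact Finset.single_le_sum (f := fun j => ‖y j‖^2) (fun j _ => sq_nonneg _) (Finset.mem_univ i)

private lemma norm_le_of_coord {d : ℕ} (y : EuclideanSpace ℝ (Fin d)) (B : ℝ) (hB : 0 ≤ B)
    (h : ∀ i, |y i| ≤ B) : ‖y‖ ≤ d * B := by
  rw [EuclideanSpace.norm_eq]
  rw [Real.sqrt_le_iff]
  refine ⟨by positivity, ?_⟩
  calc ∑ i, ‖y i‖ ^ 2 ≤ ∑ _i : Fin d, B ^ 2 := by
        refine Finset.sum_le_sum fun i _ => ?_
        rw [Real.norm_eq_abs]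
        exact pow_le_pow_left₀ (abs_nonneg _) (h i) 2
      _ = d * B ^ 2 := by simp [Finset.sum_const, Finset.card_univ]
      _ ≤ (d * B) ^ 2 := by
        have h1 : (d : ℝ) ≤ (d : ℝ) ^ 2 := by
          exact_mod_cast Nat.le_self_pow (by norm_num) d
        have h2 := mul_le_mul_of_nonneg_right h1 (sq_nonneg B)
        nlinarith

private lemma toEuclideanLin_coord {d : ℕ} (A : Matrix (Fin d) (Fin d) ℝ)
    (v : EuclideanSpace ℝ (Fin d)) (i : Fin d) :
    (Matrix.toEuclideanLin A v) i = ∑ j, A i j * v j := by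
  rw [Matrix.toEuclideanLin_apply]; rfl

private lemma toEuclideanLin_single {d : ℕ} (A : Matrix (Fin d) (Fin d) ℝ) (j : Fin d) (c : ℝ)
    (i : Fin d) : (Matrix.toEuclideanLin A (EuclideanSpace.single j c)) i = A i j * c := by
  rw [Matrix.toEuclideanLin_apply]
  simp [Matrix.mulVec_single]

/-- For compact M ⊆ ℝ^d, compact K with nonempty interior, and δ > 0, the set
S'(M) = {(a, α, A) ∈ ℝ^d × ℝ × SL(d) : a + α·A·K ⊆ M, |α| = 1 + δ} is compact, even
though SL(d) is not compact. -/
theorem stmt8 (d : ℕ) (hd : 0 < d) (M K : Set (EuclideanSpace ℝ (Fin d)))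
    (hM : IsCompact M) (hK : IsCompact K) (hint : (interior K).Nonempty)
    (δ : ℝ) (hδ : 0 < δ) :
    IsCompact {p : EuclideanSpace ℝ (Fin d) × ℝ × Matrix (Fin d) (Fin d) ℝ |
      p.2.2.det = 1 ∧ |p.2.1| = 1 + δ ∧
      (fun x => p.1 + p.2.1 • Matrix.toEuclideanLin p.2.2 x) '' K ⊆ M} := by
  -- Setup: a ball inside K and a bound for M
  obtain ⟨x₀, hx₀⟩ := hint
  obtain ⟨r, hr, hball⟩ := Metric.isOpen_iff.mp isOpen_interior x₀ hx₀
  have hballK : ball x₀ r ⊆ K := hball.trans interior_subset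
  have hx₀K : x₀ ∈ K := interior_subset hx₀
  obtain ⟨RM, hRMpos, hRM⟩ := hM.isBounded.subset_closedBall_lt 0 0
  have hnormM : ∀ m ∈ M, ‖m‖ ≤ RM := fun m hm => mem_closedBall_zero_iff.mp (hRM hm)
  have hδ1 : (0 : ℝ) < 1 + δ := by linarith
  set R₃ : ℝ := 4 * RM / ((1 + δ) * r) with hR₃def
  have hR₃pos : 0 < R₃ := by positivity
  set C : ℝ := (d : ℝ) * ((d : ℝ) * (R₃ * ‖x₀‖)) with hCdef
  have hCnonneg : 0 ≤ C := by positivity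
  set R₁ : ℝ := RM + (1 + δ) * C with hR₁def
  -- The compact superset
  have hcompact : IsCompact ((closedBall (0 : EuclideanSpace ℝ (Fin d)) R₁) ×ˢ
      ((Icc (-(1 + δ)) (1 + δ)) ×ˢ
      {A : Matrix (Fin d) (Fin d) ℝ | ∀ i j, A i j ∈ Icc (-R₃) R₃})) := by
    refine (isCompact_closedBall _ _).prod ((isCompact_Icc).prod ?_)
    have h : IsCompact ((Set.univ.pi fun _ : Fin d => Set.univ.pi fun _ : Fin d =>
        Icc (-R₃) R₃) : Set (Matrix (Fin d) (Fin d) ℝ)) :=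
      isCompact_univ_pi fun i => isCompact_univ_pi fun j => isCompact_Icc
    have hs : {A : Matrix (Fin d) (Fin d) ℝ | ∀ i j, A i j ∈ Icc (-R₃) R₃} =
        ((Set.univ.pi fun _ : Fin d => Set.univ.pi fun _ : Fin d =>
        Icc (-R₃) R₃) : Set (Matrix (Fin d) (Fin d) ℝ)) := by
      ext A
      exact ⟨fun hA i _ j _ => hA i j, fun hA i j => hA i (Set.mem_univ i) j (Set.mem_univ j)⟩
    rw [hs]
    exact h
  -- The set is closed
  have hclosed : IsClosed {p : EuclideanSpace ℝ (Fin d) × ℝ × Matrix (Fin d) (Fin d) ℝ |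
      p.2.2.det = 1 ∧ |p.2.1| = 1 + δ ∧
      (fun x => p.1 + p.2.1 • Matrix.toEuclideanLin p.2.2 x) '' K ⊆ M} := by
    have h1 : IsClosed {p : EuclideanSpace ℝ (Fin d) × ℝ × Matrix (Fin d) (Fin d) ℝ |
        p.2.2.det = 1} := isClosed_eq ((continuous_snd.snd).matrix_det) continuous_const
    have h2 : IsClosed {p : EuclideanSpace ℝ (Fin d) × ℝ × Matrix (Fin d) (Fin d) ℝ |
        |p.2.1| = 1 + δ} := isClosed_eq (continuous_snd.fst.abs) continuous_const
    have h3 : IsClosed {p : EuclideanSpace ℝ (Fin d) × ℝ × Matrix (Fin d) (Fin d) ℝ |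
        (fun x => p.1 + p.2.1 • Matrix.toEuclideanLin p.2.2 x) '' K ⊆ M} := by
      have heq : {p : EuclideanSpace ℝ (Fin d) × ℝ × Matrix (Fin d) (Fin d) ℝ |
          (fun x => p.1 + p.2.1 • Matrix.toEuclideanLin p.2.2 x) '' K ⊆ M} =
          ⋂ x ∈ K, {p : EuclideanSpace ℝ (Fin d) × ℝ × Matrix (Fin d) (Fin d) ℝ |
            p.1 + p.2.1 • Matrix.toEuclideanLin p.2.2 x ∈ M} := by
        ext p
        simp [Set.image_subset_iff, Set.subset_def]
      rw [heq]
      refine isClosed_biInter fun x _ => ?_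
      have hc : Continuous fun p : EuclideanSpace ℝ (Fin d) × ℝ × Matrix (Fin d) (Fin d) ℝ =>
          p.1 + p.2.1 • Matrix.toEuclideanLin p.2.2 x := by
        have hT : Continuous fun p : EuclideanSpace ℝ (Fin d) × ℝ × Matrix (Fin d) (Fin d) ℝ =>
            Matrix.toEuclideanLin p.2.2 x := by
          simp only [Matrix.toEuclideanLin_apply]
          exact (PiLp.continuous_toLp 2 _).comp
            ((continuous_snd.snd).matrix_mulVec continuous_const)
        exact continuous_fst.add (continuous_snd.fst.smul hT)
      exact (hM.isClosed).preimage hc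
    exact h1.inter (h2.inter h3)
  refine IsCompact.of_isClosed_subset hcompact hclosed ?_
  -- The inclusion into the superset
  rintro ⟨a, α, A⟩ ⟨hdet, habs, hsub⟩
  simp only [Set.mem_setOf_eq] at hdet habs hsub ⊢
  have hmem : ∀ x ∈ K, a + α • Matrix.toEuclideanLin A x ∈ M := fun x hx =>
    hsub ⟨x, hx, rfl⟩
  -- Entry bounds for A
  have hA : ∀ i j, A i j ∈ Icc (-R₃) R₃ := by
    intro i j
    set v : EuclideanSpace ℝ (Fin d) := EuclideanSpace.single j (r / 2) with hv
    have hvnorm : ‖v‖ = r / 2 := by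
      rw [hv, EuclideanSpace.norm_single, Real.norm_eq_abs, abs_of_pos (by linarith)]
    have hxv : x₀ + v ∈ K := by
      apply hballK
      rw [mem_ball_iff_norm]
      simp [hvnorm]
      linarith
    have hm₁ := hmem (x₀ + v) hxv
    have hm₂ := hmem x₀ hx₀K
    have hdiff : (a + α • Matrix.toEuclideanLin A (x₀ + v)) -
        (a + α • Matrix.toEuclideanLin A x₀) = α • Matrix.toEuclideanLin A v := by
      rw [map_add, smul_add]
      abel
    have hnormdiff : (1 + δ) * ‖Matrix.toEuclideanLin A v‖ ≤ 2 * RM := by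
      have : ‖α • Matrix.toEuclideanLin A v‖ ≤ 2 * RM := by
        rw [← hdiff]
        calc ‖_ - _‖ ≤ ‖(a + α • Matrix.toEuclideanLin A (x₀ + v))‖ +
              ‖(a + α • Matrix.toEuclideanLin A x₀)‖ := norm_sub_le _ _
          _ ≤ RM + RM := add_le_add (hnormM _ hm₁) (hnormM _ hm₂)
          _ = 2 * RM := by ring
      rwa [norm_smul, Real.norm_eq_abs, habs] at this
    have hcoord : |A i j| * (r / 2) ≤ ‖Matrix.toEuclideanLin A v‖ := by
      have h1 := coord_le_norm (Matrix.toEuclideanLin A v) i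
      rw [hv, toEuclideanLin_single, abs_mul, abs_of_pos (by linarith : (0:ℝ) < r / 2)] at h1
      exact h1
    rw [Set.mem_Icc, ← abs_le]
    rw [hR₃def, le_div_iff₀ (by positivity)]
    nlinarith [abs_nonneg (A i j)]
  refine ⟨?_, ?_, hA⟩
  · -- bound on a
    rw [mem_closedBall_zero_iff]
    have hTx₀ : ‖Matrix.toEuclideanLin A x₀‖ ≤ C := by
      rw [hCdef]
      apply norm_le_of_coord _ _ (by positivity)
      intro i
      rw [toEuclideanLin_coord]
      calc |∑ j, A i j * x₀ j| ≤ ∑ j, |A i j * x₀ j| := Finset.abs_sum_le_sum_abs _ _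
        _ ≤ ∑ _j : Fin d, R₃ * ‖x₀‖ := by
            refine Finset.sum_le_sum fun j _ => ?_
            rw [abs_mul]
            have h1 : |A i j| ≤ R₃ := abs_le.mpr ⟨(hA i j).1, (hA i j).2⟩
            have h2 : |x₀ j| ≤ ‖x₀‖ := coord_le_norm x₀ j
            exact mul_le_mul h1 h2 (abs_nonneg _) (le_of_lt hR₃pos)
        _ = (d : ℝ) * (R₃ * ‖x₀‖) := by simp [Finset.sum_const, Finset.card_univ]
    have hm₂ := hmem x₀ hx₀K
    calc ‖a‖ = ‖(a + α • Matrix.toEuclideanLin A x₀) - α • Matrix.toEuclideanLin A x₀‖ := by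
          rw [add_sub_cancel_right]
      _ ≤ ‖a + α • Matrix.toEuclideanLin A x₀‖ + ‖α • Matrix.toEuclideanLin A x₀‖ :=
          norm_sub_le _ _
      _ ≤ RM + (1 + δ) * C := by
          refine add_le_add (hnormM _ hm₂) ?_
          rw [norm_smul, Real.norm_eq_abs, habs]
          exact mul_le_mul_of_nonneg_left hTx₀ (le_of_lt hδ1)
  · exact abs_le.mp (le_of_eq habs)
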